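/- Under Assumption 1, suppose θ* ∈ ℝ satisfies the balance equation, and define the classifier g* by g*(x,1) = 1{1 ≤ η(x,1)·(2 − θ*/ℙ(Y=1,S=1))} and g*(x,0) = 1{1 ≤ η(x,0)·(2 + θ*/ℙ(Y=1,S=0))}. Then g* is fair and R(g*) ≤ R(g) for every fair classifier g; that is, g* is an optimal Equal Opportunity classifier. -/

import Mathlib

open MeasureTheory ProbabilityTheory Set

section AuxEO

variable {Ω : Type*} [MeasurableSpace Ω]

private lemma integrable_of_bdd {P : Measure Ω} [IsFiniteMeasure P] {f : Ω → ℝ} {C : ℝ}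
    (hm : Measurable f) (hb : ∀ ω, |f ω| ≤ C) : Integrable f P :=
  ⟨hm.aestronglyMeasurable,
    HasFiniteIntegral.of_bounded (C := C) (ae_of_all _ (by simpa [Real.norm_eq_abs] using hb))⟩

private lemma integral_ite_one (P : Measure Ω) (c : Ω → Prop) [DecidablePred c]
    (h : MeasurableSet {ω | c ω}) :
    ∫ ω, (if c ω then (1:ℝ) else 0) ∂P = (P {ω | c ω}).toReal := by
  have h1 : ∀ ω, (if c ω then (1:ℝ) else 0)
      = Set.indicator {ω | c ω} (fun _ => (1:ℝ)) ω := by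
    intro ω
    by_cases hc : c ω
    · simp [Set.indicator_apply, hc]
    · simp [Set.indicator_apply, hc]
  rw [integral_congr_ae (ae_of_all _ h1), integral_indicator_const (1:ℝ) h]
  simp [measureReal_def]

end AuxEO

theorem stmt_0 {d : ℕ} {Ω : Type*} [MeasurableSpace Ω]
    (P : Measure Ω) [IsProbabilityMeasure P]
    (X : Ω → (Fin d → ℝ)) (S Y : Ω → Bool)
    (hX : Measurable X) (hS : Measurable S) (hY : Measurable Y)
    (hSnd : 0 < P {ω | S ω = true} ∧ P {ω | S ω = true} < 1)
    (hYnd : 0 < P {ω | Y ω = true} ∧ P {ω | Y ω = true} < 1)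
    (η : (Fin d → ℝ) → Bool → ℝ)
    (hηm : Measurable (fun p : (Fin d → ℝ) × Bool => η p.1 p.2))
    (hη01 : ∀ x s, η x s ∈ Icc (0:ℝ) 1)
    (hreg : ∀ φ : (Fin d → ℝ) × Bool → ℝ, Measurable φ → (∃ C, ∀ z, |φ z| ≤ C) →
      ∫ ω, (if Y ω then (1:ℝ) else 0) * φ (X ω, S ω) ∂P
        = ∫ ω, η (X ω) (S ω) * φ (X ω, S ω) ∂P)
    -- Assumption 1
    (hcont : ∀ s : Bool, ContinuousOn
      (fun t : ℝ =>
        (ProbabilityTheory.cond P {ω | S ω = s} {ω | η (X ω) (S ω) ≤ t}).toReal)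
      (Ioo (0:ℝ) 1))
    (hhalf : ∀ s : Bool,
      0 < ProbabilityTheory.cond P {ω | S ω = s} {ω | 1 / 2 ≤ η (X ω) s})
    -- named quantities
    (p1 p0 q1 q0 : ℝ)
    (hp1 : p1 = (P {ω | Y ω = true ∧ S ω = true}).toReal)
    (hp0 : p0 = (P {ω | Y ω = true ∧ S ω = false}).toReal)
    (hq1 : q1 = (ProbabilityTheory.cond P {ω | S ω = true} {ω | Y ω = true}).toReal)
    (hq0 : q0 = (ProbabilityTheory.cond P {ω | S ω = false} {ω | Y ω = true}).toReal)
    -- θ* satisfying the balance equation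
    (θ : ℝ)
    (hbal :
      (∫ ω, η (X ω) true * (if 1 ≤ η (X ω) true * (2 - θ / p1) then (1:ℝ) else 0)
          ∂(ProbabilityTheory.cond P {ω | S ω = true})) / q1
        = (∫ ω, η (X ω) false * (if 1 ≤ η (X ω) false * (2 + θ / p0) then (1:ℝ) else 0)
          ∂(ProbabilityTheory.cond P {ω | S ω = false})) / q0)
    -- the classifier g*
    (gs : (Fin d → ℝ) → Bool → Bool)
    (hgs1 : ∀ x, gs x true = true ↔ 1 ≤ η x true * (2 - θ / p1))
    (hgs0 : ∀ x, gs x false = true ↔ 1 ≤ η x false * (2 + θ / p0)) :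
    (ProbabilityTheory.cond P {ω | S ω = true ∧ Y ω = true} {ω | gs (X ω) (S ω) = true}
      = ProbabilityTheory.cond P {ω | S ω = false ∧ Y ω = true}
          {ω | gs (X ω) (S ω) = true})
    ∧ ∀ g : (Fin d → ℝ) → Bool → Bool,
        Measurable (fun p : (Fin d → ℝ) × Bool => g p.1 p.2) →
        ProbabilityTheory.cond P {ω | S ω = true ∧ Y ω = true} {ω | g (X ω) (S ω) = true}
          = ProbabilityTheory.cond P {ω | S ω = false ∧ Y ω = true}
              {ω | g (X ω) (S ω) = true} →
        (P {ω | gs (X ω) (S ω) ≠ Y ω}).toReal ≤ (P {ω | g (X ω) (S ω) ≠ Y ω}).toReal := by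
  classical
  obtain ⟨hS1pos, hS1lt⟩ := hSnd
  have hZ : Measurable fun ω => (X ω, S ω) := hX.prodMk hS
  have hSs : ∀ s : Bool, MeasurableSet {ω | S ω = s} := fun s => hS (measurableSet_singleton s)
  have hYs : MeasurableSet {ω | Y ω = true} := hY (measurableSet_singleton true)
  have hS0pos : 0 < P {ω | S ω = false} := by
    have h1 : {ω | S ω = false} = {ω | S ω = true}ᶜ := by
      ext ω; simp [Bool.not_eq_true]
    rw [h1, prob_compl_eq_one_sub (hSs true)]
    exact tsub_pos_of_lt hS1lt
  have hSpos : ∀ s : Bool, 0 < P {ω | S ω = s} := by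
    intro s; cases s
    · exact hS0pos
    · exact hS1pos
  have hSposR : ∀ s : Bool, 0 < (P {ω | S ω = s}).toReal := fun s =>
    ENNReal.toReal_pos (hSpos s).ne' (measure_ne_top P _)
  -- the coefficient function
  set K : Bool → ℝ := fun s => if s = true then 2 - θ / p1 else 2 + θ / p0 with hK
  have hKm : Measurable K := measurable_from_top
  have hηZ : Measurable fun ω => η (X ω) (S ω) := hηm.comp hZ
  have hη0 : ∀ ω, 0 ≤ η (X ω) (S ω) := fun ω => (hη01 (X ω) (S ω)).1
  have hη1 : ∀ ω, η (X ω) (S ω) ≤ 1 := fun ω => (hη01 (X ω) (S ω)).2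
  -- g* description
  have hgsP : ∀ ω, gs (X ω) (S ω) = true ↔ 1 ≤ η (X ω) (S ω) * K (S ω) := by
    intro ω
    cases h : S ω
    · simpa [hK] using hgs0 (X ω)
    · simpa [hK] using hgs1 (X ω)
  have hgsm : Measurable (fun p : (Fin d → ℝ) × Bool => gs p.1 p.2) := by
    apply measurable_to_bool
    have hset : (fun p : (Fin d → ℝ) × Bool => gs p.1 p.2) ⁻¹' {true}
        = {p : (Fin d → ℝ) × Bool | 1 ≤ η p.1 p.2 * K p.2} := by
      ext ⟨x, s⟩
      cases s
      · simpa [hK] using hgs0 x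
      · simpa [hK] using hgs1 x
    rw [hset]
    exact measurableSet_le measurable_const (hηm.mul (hKm.comp measurable_snd))
  -- measurable sets / integrability helpers
  have hGset : ∀ g : (Fin d → ℝ) → Bool → Bool,
      Measurable (fun p : (Fin d → ℝ) × Bool => g p.1 p.2) →
      MeasurableSet {ω | g (X ω) (S ω) = true} := fun g hg =>
    (hg.comp hZ) (measurableSet_singleton true)
  have habs01 : ∀ x : ℝ, 0 ≤ x → x ≤ 1 → |x| ≤ 1 := fun x h0 h1 => abs_le.mpr ⟨by linarith, h1⟩
  have hIη : Integrable (fun ω => η (X ω) (S ω)) P :=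
    integrable_of_bdd hηZ (fun ω => habs01 _ (hη0 ω) (hη1 ω))
  have hIG : ∀ g : (Fin d → ℝ) → Bool → Bool,
      Measurable (fun p : (Fin d → ℝ) × Bool => g p.1 p.2) →
      Integrable (fun ω => if g (X ω) (S ω) = true then (1:ℝ) else 0) P := by
    intro g hg
    refine integrable_of_bdd (Measurable.ite (hGset g hg) measurable_const measurable_const)
      (C := 1) (fun ω => ?_)
    split_ifs <;> norm_num
  have hIN : ∀ g : (Fin d → ℝ) → Bool → Bool,
      Measurable (fun p : (Fin d → ℝ) × Bool => g p.1 p.2) → ∀ s : Bool,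
      Integrable (fun ω => η (X ω) (S ω)
        * (if g (X ω) (S ω) = true ∧ S ω = s then (1:ℝ) else 0)) P := by
    intro g hg s
    refine integrable_of_bdd
      (hηZ.mul (Measurable.ite ((hGset g hg).inter (hSs s)) measurable_const measurable_const))
      (C := 1) (fun ω => ?_)
    by_cases hc : g (X ω) (S ω) = true ∧ S ω = s
    · rw [if_pos hc, mul_one]
      exact habs01 _ (hη0 ω) (hη1 ω)
    · rw [if_neg hc, mul_zero, abs_zero]
      norm_num
  -- bound on K and the cost function
  set C0 : ℝ := |2 - θ / p1| + |2 + θ / p0| with hC0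
  have hKb : ∀ s : Bool, |K s| ≤ C0 := by
    intro s
    cases s
    · have hKf : K false = 2 + θ / p0 := by simp [hK]
      rw [hKf, hC0]
      exact le_add_of_nonneg_left (abs_nonneg _)
    · have hKt : K true = 2 - θ / p1 := by simp [hK]
      rw [hKt, hC0]
      exact le_add_of_nonneg_right (abs_nonneg _)
  have hcb : ∀ ω, |1 - η (X ω) (S ω) * K (S ω)| ≤ 1 + C0 := by
    intro ω
    have h1 : |η (X ω) (S ω) * K (S ω)| ≤ C0 := by
      rw [abs_mul]
      calc |η (X ω) (S ω)| * |K (S ω)| ≤ 1 * |K (S ω)| := by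
            have := habs01 _ (hη0 ω) (hη1 ω)
            exact mul_le_mul_of_nonneg_right this (abs_nonneg _)
        _ = |K (S ω)| := one_mul _
        _ ≤ C0 := hKb (S ω)
    obtain ⟨h2a, h2b⟩ := abs_le.mp h1
    exact abs_le.mpr ⟨by linarith, by linarith⟩
  have hIcG : ∀ g : (Fin d → ℝ) → Bool → Bool,
      Measurable (fun p : (Fin d → ℝ) × Bool => g p.1 p.2) →
      Integrable (fun ω => (1 - η (X ω) (S ω) * K (S ω))
        * (if g (X ω) (S ω) = true then (1:ℝ) else 0)) P := by
    intro g hg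
    refine integrable_of_bdd
      ((measurable_const.sub (hηZ.mul (hKm.comp hS))).mul
        (Measurable.ite (hGset g hg) measurable_const measurable_const))
      (C := 1 + C0) (fun ω => ?_)
    have hc := hcb ω
    have h0 : (0:ℝ) ≤ 1 + C0 := le_trans (abs_nonneg _) hc
    by_cases hgw : g (X ω) (S ω) = true
    · rw [if_pos hgw, mul_one]
      exact hc
    · rw [if_neg hgw, mul_zero, abs_zero]
      exact h0
  -- MAIN computation for an arbitrary measurable classifier
  have hMain : ∀ g : (Fin d → ℝ) → Bool → Bool,
      Measurable (fun p : (Fin d → ℝ) × Bool => g p.1 p.2) →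
      (∀ s : Bool, (P ({ω | S ω = s ∧ Y ω = true} ∩ {ω | g (X ω) (S ω) = true})).toReal
          = ∫ ω, η (X ω) (S ω) * (if g (X ω) (S ω) = true ∧ S ω = s then (1:ℝ) else 0) ∂P)
      ∧ (P {ω | g (X ω) (S ω) ≠ Y ω}).toReal
          = (∫ ω, η (X ω) (S ω) ∂P)
            + (∫ ω, (1 - η (X ω) (S ω) * K (S ω))
                * (if g (X ω) (S ω) = true then (1:ℝ) else 0) ∂P)
            - (θ / p1) * (∫ ω, η (X ω) (S ω)
                * (if g (X ω) (S ω) = true ∧ S ω = true then (1:ℝ) else 0) ∂P)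
            + (θ / p0) * (∫ ω, η (X ω) (S ω)
                * (if g (X ω) (S ω) = true ∧ S ω = false then (1:ℝ) else 0) ∂P) := by
    intro g hg
    have hgset : MeasurableSet {ω | g (X ω) (S ω) = true} := hGset g hg
    have hgsetP : MeasurableSet {p : (Fin d → ℝ) × Bool | g p.1 p.2 = true} :=
      hg (measurableSet_singleton true)
    constructor
    · intro s
      have hsets : {ω | S ω = s ∧ Y ω = true} ∩ {ω | g (X ω) (S ω) = true}
          = {ω | (g (X ω) (S ω) = true ∧ S ω = s) ∧ Y ω = true} := by
        ext ω; simp only [Set.mem_inter_iff, Set.mem_setOf_eq]; tauto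
      have hmes : MeasurableSet {ω | (g (X ω) (S ω) = true ∧ S ω = s) ∧ Y ω = true} :=
        (hgset.inter (hSs s)).inter hYs
      rw [hsets, ← integral_ite_one P _ hmes]
      have hpt : ∀ ω, (if (g (X ω) (S ω) = true ∧ S ω = s) ∧ Y ω = true then (1:ℝ) else 0)
          = (if Y ω then (1:ℝ) else 0)
            * (if g (X ω) (S ω) = true ∧ S ω = s then (1:ℝ) else 0) := by
        intro ω
        by_cases h1 : Y ω = true <;> by_cases h2 : g (X ω) (S ω) = true ∧ S ω = s <;>
          simp [h1, h2]
      rw [integral_congr_ae (ae_of_all _ hpt)]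
      exact hreg (fun p => if g p.1 p.2 = true ∧ p.2 = s then (1:ℝ) else 0)
        (Measurable.ite (hgsetP.inter (measurable_snd (measurableSet_singleton s)))
          measurable_const measurable_const)
        ⟨1, fun z => abs_le.mpr (by
          by_cases hc : g z.1 z.2 = true ∧ z.2 = s <;> simp [hc] <;> split_ifs <;>
            norm_num)⟩
    · have hmm : MeasurableSet {ω | g (X ω) (S ω) ≠ Y ω} := by
        have h1 : {ω | g (X ω) (S ω) ≠ Y ω}
            = ({ω | g (X ω) (S ω) = true} ∩ {ω | Y ω = true}ᶜ)
              ∪ ({ω | g (X ω) (S ω) = true}ᶜ ∩ {ω | Y ω = true}) := by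
          ext ω
          cases h1 : g (X ω) (S ω) <;> cases h2 : Y ω <;> simp [h1, h2]
        rw [h1]
        exact (hgset.inter hYs.compl).union (hgset.compl.inter hYs)
      rw [← integral_ite_one P _ hmm]
      have hpt : ∀ ω, (if g (X ω) (S ω) ≠ Y ω then (1:ℝ) else 0)
          = (if g (X ω) (S ω) = true then (1:ℝ) else 0)
            + (if Y ω then (1:ℝ) else 0)
              * (1 - 2 * (if g (X ω) (S ω) = true then (1:ℝ) else 0)) := by
        intro ω
        cases h1 : g (X ω) (S ω) <;> cases h2 : Y ω <;> simp [h1, h2] <;> norm_num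
      rw [integral_congr_ae (ae_of_all _ hpt)]
      have hIY2 : Integrable (fun ω => (if Y ω then (1:ℝ) else 0)
          * (1 - 2 * (if g (X ω) (S ω) = true then (1:ℝ) else 0))) P := by
        refine integrable_of_bdd
          ((Measurable.ite hYs measurable_const measurable_const).mul
            (measurable_const.sub (measurable_const.mul
              (Measurable.ite hgset measurable_const measurable_const))))
          (C := 3) (fun ω => ?_)
        rw [abs_mul]
        split_ifs <;> norm_num
      have hIη2 : Integrable (fun ω => η (X ω) (S ω)
          * (1 - 2 * (if g (X ω) (S ω) = true then (1:ℝ) else 0))) P := by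
        refine integrable_of_bdd
          (hηZ.mul (measurable_const.sub (measurable_const.mul
            (Measurable.ite hgset measurable_const measurable_const))))
          (C := 3) (fun ω => ?_)
        rw [abs_mul]
        have hb1 := habs01 _ (hη0 ω) (hη1 ω)
        have hb2 : |1 - 2 * (if g (X ω) (S ω) = true then (1:ℝ) else 0)| ≤ 3 := by
          refine abs_le.mpr ?_
          split_ifs <;> constructor <;> norm_num
        calc |η (X ω) (S ω)| * |1 - 2 * (if g (X ω) (S ω) = true then (1:ℝ) else 0)|
            ≤ 1 * 3 := mul_le_mul hb1 hb2 (abs_nonneg _) zero_le_one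
          _ = 3 := by norm_num
      calc ∫ ω, ((if g (X ω) (S ω) = true then (1:ℝ) else 0)
              + (if Y ω then (1:ℝ) else 0)
                * (1 - 2 * (if g (X ω) (S ω) = true then (1:ℝ) else 0))) ∂P
          = (∫ ω, (if g (X ω) (S ω) = true then (1:ℝ) else 0) ∂P)
            + ∫ ω, (if Y ω then (1:ℝ) else 0)
                * (1 - 2 * (if g (X ω) (S ω) = true then (1:ℝ) else 0)) ∂P :=
            integral_add (hIG g hg) hIY2
        _ = (∫ ω, (if g (X ω) (S ω) = true then (1:ℝ) else 0) ∂P)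
            + ∫ ω, η (X ω) (S ω)
                * (1 - 2 * (if g (X ω) (S ω) = true then (1:ℝ) else 0)) ∂P := by
            congr 1
            exact hreg (fun p => 1 - 2 * (if g p.1 p.2 = true then (1:ℝ) else 0))
              (measurable_const.sub (measurable_const.mul
                (Measurable.ite hgsetP measurable_const measurable_const)))
              ⟨3, fun z => abs_le.mpr (by
                by_cases hc : g z.1 z.2 = true <;> simp [hc] <;> norm_num)⟩
        _ = ∫ ω, ((if g (X ω) (S ω) = true then (1:ℝ) else 0)
              + η (X ω) (S ω)
                * (1 - 2 * (if g (X ω) (S ω) = true then (1:ℝ) else 0))) ∂P :=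
            (integral_add (hIG g hg) hIη2).symm
        _ = ∫ ω, (η (X ω) (S ω)
              + (1 - η (X ω) (S ω) * K (S ω))
                * (if g (X ω) (S ω) = true then (1:ℝ) else 0)
              - (θ / p1) * (η (X ω) (S ω)
                * (if g (X ω) (S ω) = true ∧ S ω = true then (1:ℝ) else 0))
              + (θ / p0) * (η (X ω) (S ω)
                * (if g (X ω) (S ω) = true ∧ S ω = false then (1:ℝ) else 0))) ∂P := by
            have hpt2 : ∀ ω, (if g (X ω) (S ω) = true then (1:ℝ) else 0)
                + η (X ω) (S ω)
                  * (1 - 2 * (if g (X ω) (S ω) = true then (1:ℝ) else 0))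
                = η (X ω) (S ω)
                  + (1 - η (X ω) (S ω) * K (S ω))
                    * (if g (X ω) (S ω) = true then (1:ℝ) else 0)
                  - (θ / p1) * (η (X ω) (S ω)
                    * (if g (X ω) (S ω) = true ∧ S ω = true then (1:ℝ) else 0))
                  + (θ / p0) * (η (X ω) (S ω)
                    * (if g (X ω) (S ω) = true ∧ S ω = false then (1:ℝ) else 0)) := by
              intro ω
              cases hs : S ω
              · by_cases hgw : g (X ω) false = true <;> simp [hK, hgw] <;> ring
              · by_cases hgw : g (X ω) true = true <;> simp [hK, hgw] <;> ring
            exact integral_congr_ae (ae_of_all _ hpt2)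
        _ = _ := by
            have hI3 : Integrable (fun ω => η (X ω) (S ω)
                + (1 - η (X ω) (S ω) * K (S ω))
                  * (if g (X ω) (S ω) = true then (1:ℝ) else 0)) P := hIη.add (hIcG g hg)
            have hI4 : Integrable (fun ω => η (X ω) (S ω)
                + (1 - η (X ω) (S ω) * K (S ω))
                  * (if g (X ω) (S ω) = true then (1:ℝ) else 0)
                - (θ / p1) * (η (X ω) (S ω)
                  * (if g (X ω) (S ω) = true ∧ S ω = true then (1:ℝ) else 0))) P :=
              hI3.sub ((hIN g hg true).const_mul (θ / p1))
            have hI5 : Integrable (fun ω => (θ / p0) * (η (X ω) (S ω)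
                * (if g (X ω) (S ω) = true ∧ S ω = false then (1:ℝ) else 0))) P :=
              (hIN g hg false).const_mul (θ / p0)
            have hI6 : Integrable (fun ω => (θ / p1) * (η (X ω) (S ω)
                * (if g (X ω) (S ω) = true ∧ S ω = true then (1:ℝ) else 0))) P :=
              (hIN g hg true).const_mul (θ / p1)
            rw [integral_add hI4 hI5, integral_sub hI3 hI6,
              integral_add hIη (hIcG g hg), integral_const_mul, integral_const_mul]
  -- positivity of p1, p0
  have hPYint : ∀ s : Bool, (P {ω | Y ω = true ∧ S ω = s}).toReal
      = ∫ ω, η (X ω) (S ω) * (if S ω = s then (1:ℝ) else 0) ∂P := by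
    intro s
    have hmes : MeasurableSet {ω | Y ω = true ∧ S ω = s} := hYs.inter (hSs s)
    rw [← integral_ite_one P _ hmes]
    have hpt : ∀ ω, (if Y ω = true ∧ S ω = s then (1:ℝ) else 0)
        = (if Y ω then (1:ℝ) else 0) * (if S ω = s then (1:ℝ) else 0) := by
      intro ω
      by_cases h1 : Y ω = true <;> by_cases h2 : S ω = s <;> simp [h1, h2]
    rw [integral_congr_ae (ae_of_all _ hpt)]
    exact hreg (fun p => if p.2 = s then (1:ℝ) else 0)
      (Measurable.ite (measurable_snd (measurableSet_singleton s))
        measurable_const measurable_const)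
      ⟨1, fun z => abs_le.mpr (by
        by_cases hc : z.2 = s <;> simp [hc] <;> split_ifs <;> norm_num)⟩
  have hppos : ∀ s : Bool, 0 < (P {ω | Y ω = true ∧ S ω = s}).toReal := by
    intro s
    have hηsm : Measurable fun ω => η (X ω) s :=
      hηm.comp (hX.prodMk measurable_const)
    have hBm : MeasurableSet {ω | 1/2 ≤ η (X ω) s ∧ S ω = s} :=
      (measurableSet_le measurable_const hηsm).inter (hSs s)
    have hne : P ({ω | S ω = s} ∩ {ω | 1/2 ≤ η (X ω) s}) ≠ 0 := by
      intro h0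
      have hh := hhalf s
      rw [cond_apply (hSs s), h0, mul_zero] at hh
      exact lt_irrefl 0 hh
    have hpos2 : 0 < (P {ω | 1/2 ≤ η (X ω) s ∧ S ω = s}).toReal := by
      have hseteq : {ω | 1/2 ≤ η (X ω) s ∧ S ω = s}
          = {ω | S ω = s} ∩ {ω | 1/2 ≤ η (X ω) s} := by
        ext ω; simp only [Set.mem_inter_iff, Set.mem_setOf_eq]; tauto
      rw [hseteq]
      exact ENNReal.toReal_pos hne (measure_ne_top P _)
    have hIlhs : Integrable (fun ω => (1/2 : ℝ)
        * (if 1/2 ≤ η (X ω) s ∧ S ω = s then (1:ℝ) else 0)) P := by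
      refine integrable_of_bdd
        (measurable_const.mul (Measurable.ite hBm measurable_const measurable_const))
        (C := 1) (fun ω => ?_)
      by_cases hc : 1/2 ≤ η (X ω) s ∧ S ω = s
      · rw [if_pos hc, mul_one, abs_of_nonneg (by norm_num : (0:ℝ) ≤ 1/2)]
        norm_num
      · rw [if_neg hc, mul_zero, abs_zero]
        norm_num
    have hIrhs : Integrable (fun ω => η (X ω) (S ω) * (if S ω = s then (1:ℝ) else 0)) P := by
      refine integrable_of_bdd
        (hηZ.mul (Measurable.ite (hSs s) measurable_const measurable_const))
        (C := 1) (fun ω => ?_)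
      rw [abs_mul]
      split_ifs <;> simp [abs_of_nonneg (hη0 ω), hη1 ω]
    have hmono : (∫ ω, (1/2 : ℝ)
        * (if 1/2 ≤ η (X ω) s ∧ S ω = s then (1:ℝ) else 0) ∂P)
        ≤ ∫ ω, η (X ω) (S ω) * (if S ω = s then (1:ℝ) else 0) ∂P := by
      refine integral_mono hIlhs hIrhs (fun ω => ?_)
      by_cases hc : 1/2 ≤ η (X ω) s ∧ S ω = s
      · rw [if_pos hc, if_pos hc.2, mul_one, mul_one, hc.2]
        exact hc.1
      · rw [if_neg hc, mul_zero]
        by_cases h2 : S ω = s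
        · rw [if_pos h2, mul_one]
          exact hη0 ω
        · simp [if_neg h2]
    rw [hPYint s]
    have hlhs : (∫ ω, (1/2 : ℝ)
        * (if 1/2 ≤ η (X ω) s ∧ S ω = s then (1:ℝ) else 0) ∂P)
        = (1/2 : ℝ) * (P {ω | 1/2 ≤ η (X ω) s ∧ S ω = s}).toReal := by
      rw [integral_const_mul, integral_ite_one P _ hBm]
    nlinarith
  have hp1pos : 0 < p1 := by rw [hp1]; exact hppos true
  have hp0pos : 0 < p0 := by rw [hp0]; exact hppos false
  -- relate the measure of {S = s ∧ Y} to p_s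
  have hcomm : ∀ s : Bool, {ω | S ω = s ∧ Y ω = true} = {ω | Y ω = true ∧ S ω = s} :=
    fun s => Set.ext fun ω => and_comm
  have hPt1 : (P {ω | S ω = true ∧ Y ω = true}).toReal = p1 := by rw [hcomm, hp1]
  have hPt0 : (P {ω | S ω = false ∧ Y ω = true}).toReal = p0 := by rw [hcomm, hp0]
  have hPt1ne : P {ω | S ω = true ∧ Y ω = true} ≠ 0 := by
    intro h0
    rw [← hPt1, h0] at hp1pos
    simp at hp1pos
  have hPt0ne : P {ω | S ω = false ∧ Y ω = true} ≠ 0 := by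
    intro h0
    rw [← hPt0, h0] at hp0pos
    simp at hp0pos
  -- rewrite the conditional integrals from the balance equation
  have hcondInt : ∀ (s : Bool) (r : ℝ), (∀ x, gs x s = true ↔ 1 ≤ η x s * r) →
      (∫ ω, η (X ω) s * (if 1 ≤ η (X ω) s * r then (1:ℝ) else 0)
          ∂(ProbabilityTheory.cond P {ω | S ω = s}))
        = (P {ω | S ω = s}).toReal⁻¹
          * ∫ ω, η (X ω) (S ω) * (if gs (X ω) (S ω) = true ∧ S ω = s then (1:ℝ) else 0) ∂P := by
    intro s r hgs'
    rw [ProbabilityTheory.cond, integral_smul_measure, ENNReal.toReal_inv, smul_eq_mul]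
    congr 1
    calc (∫ ω in {ω | S ω = s}, η (X ω) s
            * (if 1 ≤ η (X ω) s * r then (1:ℝ) else 0) ∂P)
        = ∫ ω in {ω | S ω = s}, η (X ω) (S ω)
            * (if gs (X ω) (S ω) = true ∧ S ω = s then (1:ℝ) else 0) ∂P := by
          refine setIntegral_congr_fun (hSs s) (fun ω hω => ?_)
          have hs : S ω = s := hω
          rw [hs]
          congr 1
          refine if_congr ?_ rfl rfl
          simp [hgs' (X ω)]
      _ = ∫ ω, η (X ω) (S ω)
            * (if gs (X ω) (S ω) = true ∧ S ω = s then (1:ℝ) else 0) ∂P := by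
          refine setIntegral_eq_integral_of_forall_compl_eq_zero (fun ω hω => ?_)
          have hs : ¬ (S ω = s) := hω
          rw [if_neg (fun hc => hs hc.2), mul_zero]
  -- compute q1, q0
  have hq1' : q1 = (P {ω | S ω = true}).toReal⁻¹ * p1 := by
    have hseteq : {ω | S ω = true} ∩ {ω | Y ω = true} = {ω | Y ω = true ∧ S ω = true} :=
      Set.ext fun ω => and_comm
    rw [hq1, cond_apply (hSs true), hseteq, ENNReal.toReal_mul, ENNReal.toReal_inv, hp1]
  have hq0' : q0 = (P {ω | S ω = false}).toReal⁻¹ * p0 := by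
    have hseteq : {ω | S ω = false} ∩ {ω | Y ω = true} = {ω | Y ω = true ∧ S ω = false} :=
      Set.ext fun ω => and_comm
    rw [hq0, cond_apply (hSs false), hseteq, ENNReal.toReal_mul, ENNReal.toReal_inv, hp0]
  -- the balance equation in terms of plain integrals
  have hbalN :
      (∫ ω, η (X ω) (S ω)
        * (if gs (X ω) (S ω) = true ∧ S ω = true then (1:ℝ) else 0) ∂P) / p1
      = (∫ ω, η (X ω) (S ω)
        * (if gs (X ω) (S ω) = true ∧ S ω = false then (1:ℝ) else 0) ∂P) / p0 := by
    have hb := hbal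
    rw [hcondInt true (2 - θ / p1) hgs1, hcondInt false (2 + θ / p0) hgs0, hq1', hq0'] at hb
    have ha1 : ((P {ω | S ω = true}).toReal)⁻¹ ≠ 0 := inv_ne_zero (hSposR true).ne'
    have ha0 : ((P {ω | S ω = false}).toReal)⁻¹ ≠ 0 := inv_ne_zero (hSposR false).ne'
    rwa [mul_div_mul_left _ _ ha1, mul_div_mul_left _ _ ha0] at hb
  have hts : ∀ s : Bool, MeasurableSet {ω | S ω = s ∧ Y ω = true} := fun s =>
    (hSs s).inter hYs
  -- fairness of a classifier in real terms
  have hfairReal : ∀ g : (Fin d → ℝ) → Bool → Bool,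
      Measurable (fun p : (Fin d → ℝ) × Bool => g p.1 p.2) →
      ProbabilityTheory.cond P {ω | S ω = true ∧ Y ω = true} {ω | g (X ω) (S ω) = true}
        = ProbabilityTheory.cond P {ω | S ω = false ∧ Y ω = true}
            {ω | g (X ω) (S ω) = true} →
      (∫ ω, η (X ω) (S ω)
        * (if g (X ω) (S ω) = true ∧ S ω = true then (1:ℝ) else 0) ∂P) / p1
      = (∫ ω, η (X ω) (S ω)
        * (if g (X ω) (S ω) = true ∧ S ω = false then (1:ℝ) else 0) ∂P) / p0 := by
    intro g hg hfair
    have h1 := congrArg ENNReal.toReal hfair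
    rw [cond_apply (hts true), cond_apply (hts false),
      ENNReal.toReal_mul, ENNReal.toReal_mul, ENNReal.toReal_inv, ENNReal.toReal_inv,
      (hMain g hg).1 true, (hMain g hg).1 false, hPt1, hPt0] at h1
    rw [div_eq_inv_mul, div_eq_inv_mul]
    exact h1
  -- fairness of g*
  have hfairgs :
      ProbabilityTheory.cond P {ω | S ω = true ∧ Y ω = true} {ω | gs (X ω) (S ω) = true}
        = ProbabilityTheory.cond P {ω | S ω = false ∧ Y ω = true}
            {ω | gs (X ω) (S ω) = true} := by
    rw [cond_apply (hts true), cond_apply (hts false)]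
    refine (ENNReal.toReal_eq_toReal_iff'
      (ENNReal.mul_ne_top (ENNReal.inv_ne_top.mpr hPt1ne) (measure_ne_top P _))
      (ENNReal.mul_ne_top (ENNReal.inv_ne_top.mpr hPt0ne) (measure_ne_top P _))).mp ?_
    rw [ENNReal.toReal_mul, ENNReal.toReal_mul, ENNReal.toReal_inv, ENNReal.toReal_inv,
      (hMain gs hgsm).1 true, (hMain gs hgsm).1 false, hPt1, hPt0]
    rw [div_eq_inv_mul, div_eq_inv_mul] at hbalN
    exact hbalN
  refine ⟨hfairgs, ?_⟩
  -- optimality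
  intro g hg hfair
  have hRg := (hMain g hg).2
  have hRgs := (hMain gs hgsm).2
  have hfg := hfairReal g hg hfair
  rw [hRg, hRgs]
  -- pointwise inequality on the cost term
  have hIneq : (∫ ω, (1 - η (X ω) (S ω) * K (S ω))
        * (if gs (X ω) (S ω) = true then (1:ℝ) else 0) ∂P)
      ≤ ∫ ω, (1 - η (X ω) (S ω) * K (S ω))
        * (if g (X ω) (S ω) = true then (1:ℝ) else 0) ∂P := by
    refine integral_mono (hIcG gs hgsm) (hIcG g hg) (fun ω => ?_)
    by_cases hgw : gs (X ω) (S ω) = true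
    · have hc : 1 - η (X ω) (S ω) * K (S ω) ≤ 0 := by
        have := (hgsP ω).mp hgw
        linarith
      rw [if_pos hgw, mul_one]
      split_ifs with h2
      · rw [mul_one]
      · rw [mul_zero]; exact hc
    · have hc : 0 ≤ 1 - η (X ω) (S ω) * K (S ω) := by
        have := (hgsP ω)
        by_contra hcon
        push_neg at hcon
        exact hgw (this.mpr (by linarith))
      rw [if_neg hgw, mul_zero]
      split_ifs with h2
      · rw [mul_one]; exact hc
      · rw [mul_zero]
  -- the correction terms coincide for fair classifiers
  have hcorr : ∀ N1 N0 : ℝ, N1 / p1 = N0 / p0 → (θ / p1) * N1 = (θ / p0) * N0 := by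
    intro N1 N0 h
    have h2 : θ * (N1 / p1) = θ * (N0 / p0) := by rw [h]
    calc (θ / p1) * N1 = θ * (N1 / p1) := by ring
      _ = θ * (N0 / p0) := h2
      _ = (θ / p0) * N0 := by ring
  have h1 := hcorr _ _ hbalN
  have h2 := hcorr _ _ hfg
  linarith
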